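/- arXiv:2304.12131 — 2 statements merged into one kernel-verified Lean document; each statement's English description precedes it below -/
import Mathlib

section
/- Let w be a word over {1,…,n} and S, T ⊆ {1,…,n} with |S| = |T| and S < T. Then there exists N ∈ [S,T] with N ≠ S such that |w|_N ≥ min(|w|_S, |w|_T) and the order interval [S,N] has chain length at most n. -/
/-- The i-th smallest element (0-indexed) of a finite set of naturals. -/
def nth (S : Finset ℕ) (i : ℕ) : ℕ := (S.sort (· ≤ ·)).getD i 0

/-- The order on 2^[n]: S ≤ T iff |S| ≥ |T| and S^i ≤ T^i for i ≤ |T|. -/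
def gale (S T : Finset ℕ) : Prop :=
  T.card ≤ S.card ∧ ∀ i < T.card, nth S i ≤ nth T i

/-- |w|_N : number of occurrences in w of letters from N. -/
def wcount (w : List ℕ) (N : Finset ℕ) : ℕ := (w.filter (· ∈ N)).length

/-- A strictly increasing chain from S to T inside the order interval [S,T]. -/
def isChain (S T : Finset ℕ) (P : List (Finset ℕ)) : Prop :=
  P.head? = some S ∧ P.getLast? = some T ∧
  P.Chain' (fun A B => gale A B ∧ A ≠ B) ∧
  ∀ Q ∈ P, gale S Q ∧ gale Q T

/-- The join S ∨ T in 2^[n]. -/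
def galeJoin (S T : Finset ℕ) : Finset ℕ :=
  (Finset.range (min S.card T.card)).image fun i => max (nth S i) (nth T i)

/-- The meet S ∧ T in 2^[n]. -/
def galeMeet (S T : Finset ℕ) : Finset ℕ :=
  ((Finset.range (min S.card T.card)).image fun i => min (nth S i) (nth T i)) ∪
    (if T.card ≤ S.card then (Finset.Ico T.card S.card).image (nth S)
     else (Finset.Ico S.card T.card).image (nth T))


def cntle (S : Finset ℕ) (x : ℕ) : ℕ := (S.filter (· ≤ x)).card

lemma nth_mem {S : Finset ℕ} {i : ℕ} (h : i < S.card) : nth S i ∈ S := by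
  have hl : i < (S.sort (· ≤ ·)).length := by rwa [Finset.length_sort]
  rw [nth, List.getD_eq_getElem _ _ hl]
  exact (Finset.mem_sort _).mp (List.getElem_mem _)

lemma cntle_eq (S : Finset ℕ) (x : ℕ) :
    cntle S x = ((S.sort (· ≤ ·)).filter (fun y => y ≤ x)).length := by
  have h1 : (S.filter (· ≤ x)).val = S.val.filter (· ≤ x) := Finset.filter_val _ _
  have h2 : (S.sort (· ≤ ·) : Multiset ℕ) = S.val := Finset.sort_eq _ _
  have : Multiset.card (S.val.filter (· ≤ x)) =
      ((S.sort (· ≤ ·)).filter (fun y => y ≤ x)).length := by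
    rw [← h2, Multiset.filter_coe, Multiset.coe_card]
  rw [cntle, Finset.card_def, h1, this]

lemma sorted_getD_le_iff : ∀ (l : List ℕ), l.Pairwise (· ≤ ·) → ∀ (i : ℕ) (x : ℕ), i < l.length →
    (l.getD i 0 ≤ x ↔ i + 1 ≤ (l.filter (fun y => y ≤ x)).length)
  | [], _, i, x, hi => by simp at hi
  | a :: l, hl, i, x, hi => by
    have hsl : l.Pairwise (· ≤ ·) := hl.of_cons
    have ha : ∀ y ∈ l, a ≤ y := fun y hy => (List.pairwise_cons.mp hl).1 y hy
    have hfl : ¬ a ≤ x → (l.filter (fun y => y ≤ x)).length = 0 := by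
      intro hax
      rw [List.length_eq_zero_iff, List.filter_eq_nil_iff]
      intro y hy
      simp only [decide_eq_true_eq]
      exact fun hyx => hax (le_trans (ha y hy) hyx)
    cases i with
    | zero =>
      by_cases hax : a ≤ x
      · simp [List.filter_cons, hax]
      · simp [List.filter_cons, hax, hfl hax]
    | succ i =>
      have hi' : i < l.length := by simpa using hi
      rw [List.getD_cons_succ, List.filter_cons, sorted_getD_le_iff l hsl i x hi']
      by_cases hax : a ≤ x
      · simp only [hax, decide_true, if_true, List.length_cons]; omega
      · simp [hax, hfl hax]

lemma nth_le_iff {S : Finset ℕ} {i x : ℕ} (h : i < S.card) :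
    nth S i ≤ x ↔ i + 1 ≤ cntle S x := by
  rw [cntle_eq, nth]
  exact sorted_getD_le_iff _ (Finset.pairwise_sort _ _) i x (by rwa [Finset.length_sort])

lemma cntle_le_card (S : Finset ℕ) (x : ℕ) : cntle S x ≤ S.card :=
  Finset.card_filter_le _ _

lemma gale_iff {S T : Finset ℕ} (h : T.card ≤ S.card) :
    gale S T ↔ ∀ x, cntle T x ≤ cntle S x := by
  constructor
  · rintro ⟨-, hg⟩ x
    rcases Nat.eq_zero_or_pos (cntle T x) with h0 | h0
    · omega
    · have hk : cntle T x - 1 < T.card := by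
        have := cntle_le_card T x; omega
      have h1 : nth T (cntle T x - 1) ≤ x := by
        rw [nth_le_iff hk]; omega
      have h2 : nth S (cntle T x - 1) ≤ x := le_trans (hg _ hk) h1
      have := (nth_le_iff (lt_of_lt_of_le hk h)).mp h2
      omega
  · intro hc
    refine ⟨h, fun i hi => ?_⟩
    have h1 : i + 1 ≤ cntle T (nth T i) := (nth_le_iff hi).mp le_rfl
    exact (nth_le_iff (lt_of_lt_of_le hi h)).mpr (le_trans h1 (hc _))

lemma sum_range_getD (f : ℕ → ℕ) : ∀ (l : List ℕ),
    ∑ i ∈ Finset.range l.length, f (l.getD i 0) = (l.map f).sum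
  | [] => by simp
  | a :: l => by
    rw [List.length_cons, Finset.sum_range_succ']
    simp only [List.getD_cons_succ, List.getD_cons_zero, List.map_cons, List.sum_cons]
    rw [sum_range_getD f l, Nat.add_comm]

lemma sum_range_nth (f : ℕ → ℕ) (S : Finset ℕ) :
    ∑ i ∈ Finset.range S.card, f (nth S i) = ∑ x ∈ S, f x := by
  have h2 : (S.sort (· ≤ ·) : Multiset ℕ) = S.val := Finset.sort_eq _ _
  have : ∑ x ∈ S, f x = ((S.sort (· ≤ ·)).map f).sum := by
    rw [Finset.sum, ← h2, Multiset.map_coe, Multiset.sum_coe]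
  rw [this, ← sum_range_getD, ← Finset.length_sort (· ≤ ·)]
  rfl

lemma eq_of_nth_eq {S T : Finset ℕ} (hc : S.card = T.card)
    (h : ∀ i < S.card, nth S i = nth T i) : S = T := by
  have hlen : (S.sort (· ≤ ·)).length = (T.sort (· ≤ ·)).length := by
    rw [Finset.length_sort, Finset.length_sort, hc]
  have hls : S.sort (· ≤ ·) = T.sort (· ≤ ·) := by
    apply List.ext_getElem hlen
    intro i h1 h2
    have hi : i < S.card := by rwa [Finset.length_sort] at h1
    have := h i hi
    rwa [nth, nth, List.getD_eq_getElem _ _ h1, List.getD_eq_getElem _ _ h2] at this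
  have : (S.sort (· ≤ ·) : Multiset ℕ) = (T.sort (· ≤ ·) : Multiset ℕ) := by rw [hls]
  rw [Finset.sort_eq, Finset.sort_eq] at this
  exact Finset.val_inj.mp this

lemma sum_lt_of_gale {A B : Finset ℕ} (hg : gale A B) (hc : A.card = B.card) (hne : A ≠ B) :
    ∑ x ∈ A, x < ∑ x ∈ B, x := by
  have eA := sum_range_nth id A
  have eB := sum_range_nth id B
  simp only [id] at eA eB
  rw [← eA, ← eB, ← hc]
  apply Finset.sum_lt_sum
  · intro i hi
    exact hg.2 i (by rw [Finset.mem_range] at hi; omega)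
  · by_contra hall
    push_neg at hall
    apply hne
    apply eq_of_nth_eq hc
    intro i hi
    exact le_antisymm (hg.2 i (hc ▸ hi)) (hall i (Finset.mem_range.mpr hi))

lemma chain_lt_len : ∀ (l : List ℕ) (a b : ℕ), l.Chain' (· < ·) →
    l.head? = some a → l.getLast? = some b → a + l.length ≤ b + 1
  | [], a, b => by simp
  | [x], a, b => by
    intro _ h1 h2
    simp only [List.head?_cons, Option.some.injEq] at h1
    simp only [List.getLast?_singleton, Option.some.injEq] at h2
    simp [← h1, ← h2]
  | x :: y :: l, a, b => by
    intro hc h1 h2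
    simp only [List.head?_cons, Option.some.injEq] at h1
    simp only [List.Chain', List.isChain_cons_cons] at hc
    rw [List.getLast?_cons_cons] at h2
    have := chain_lt_len (y :: l) y b hc.2 rfl h2
    simp only [List.length_cons] at this ⊢
    omega

lemma wcount_eq_sum (w : List ℕ) (M : Finset ℕ) : wcount w M = ∑ x ∈ M, w.count x := by
  induction w with
  | nil => simp [wcount]
  | cons a w ih =>
    rw [wcount, List.filter_cons]
    have hc : ∀ x : ℕ, (a :: w).count x = w.count x + if x = a then 1 else 0 := by
      intro x
      rw [List.count_cons]
      congr 1
      simp [beq_iff_eq]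
      split_ifs with h1 h2 h2 <;> first | rfl | (exfalso; omega)
    have hR : ∑ x ∈ M, (a :: w).count x = (∑ x ∈ M, w.count x) + if a ∈ M then 1 else 0 := by
      rw [Finset.sum_congr rfl fun x _ => hc x, Finset.sum_add_distrib, Finset.sum_ite_eq']
    rw [hR, ← ih]
    by_cases ha : a ∈ M <;> simp [ha, wcount]

lemma cntle_insert {M : Finset ℕ} {v : ℕ} (hv : v ∉ M) (x : ℕ) :
    cntle (insert v M) x = cntle M x + if v ≤ x then 1 else 0 := by
  rw [cntle, cntle, Finset.filter_insert]
  split_ifs with h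
  · rw [Finset.card_insert_of_notMem (fun hh => hv (Finset.mem_of_mem_filter _ hh))]
  · rfl

lemma cntle_erase {M : Finset ℕ} {u : ℕ} (hu : u ∈ M) (x : ℕ) :
    cntle (M.erase u) x + (if u ≤ x then 1 else 0) = cntle M x := by
  rw [cntle, cntle, Finset.filter_erase]
  split_ifs with h
  · have hmem : u ∈ M.filter (fun y => y ≤ x) := Finset.mem_filter.mpr ⟨hu, h⟩
    rw [Finset.card_erase_of_mem hmem]
    have : 0 < (M.filter (fun y => y ≤ x)).card := Finset.card_pos.mpr ⟨u, hmem⟩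
    omega
  · have hnmem : u ∉ M.filter (fun y => y ≤ x) := by
      intro hh
      exact h (Finset.mem_filter.mp hh).2
    rw [Finset.erase_eq_of_notMem hnmem]
    omega

lemma cntle_split (S T : Finset ℕ) (x : ℕ) :
    cntle S x = cntle (S \ T) x + cntle (S ∩ T) x := by
  conv_lhs => rw [cntle, ← Finset.sdiff_union_inter S T]
  rw [Finset.filter_union, Finset.card_union_of_disjoint
    (Finset.disjoint_filter_filter (Finset.disjoint_sdiff_inter S T))]
  rfl


theorem stmt_11 (n : ℕ) (w : List ℕ) (hw : ∀ x ∈ w, x ∈ Finset.Icc 1 n)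
    (S T : Finset ℕ) (hS : S ⊆ Finset.Icc 1 n) (hT : T ⊆ Finset.Icc 1 n)
    (hcard : S.card = T.card) (hST : gale S T) (hne : S ≠ T) :
    ∃ N : Finset ℕ, gale S N ∧ gale N T ∧ N ≠ S ∧
      min (wcount w S) (wcount w T) ≤ wcount w N ∧
      ∀ P : List (Finset ℕ), isChain S N P → P.length ≤ n := by
  classical
  set A := S \ T with hA
  set B := T \ S with hB
  have hAB : A.card = B.card := Finset.card_sdiff_comm hcard
  have hAne : A.Nonempty := by
    rw [hA, Finset.sdiff_nonempty]
    intro hsub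
    exact hne (Finset.eq_of_subset_of_card_le hsub (le_of_eq hcard.symm))
  have hm : 0 < A.card := Finset.card_pos.mpr hAne
  have hcnt : ∀ x, cntle T x ≤ cntle S x := (gale_iff (le_of_eq hcard.symm)).mp hST
  have hTS : ∀ x, cntle T x = cntle B x + cntle (S ∩ T) x := by
    intro x
    rw [hB, cntle_split T S, Finset.inter_comm]
  have hSS : ∀ x, cntle S x = cntle A x + cntle (S ∩ T) x := by
    intro x
    rw [hA, cntle_split S T]
  have hcntAB : ∀ x, cntle B x ≤ cntle A x := by
    intro x
    have h1 := hSS x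
    have h2 := hTS x
    have h3 := hcnt x
    omega
  obtain ⟨j, hjm, hjmax⟩ := Finset.exists_max_image (Finset.range A.card)
      (fun i => (w.count (nth B i) : ℤ) - w.count (nth A i)) ⟨0, Finset.mem_range.mpr hm⟩
  rw [Finset.mem_range] at hjm
  set u := nth A j with hu
  set v := nth B j with hv
  have hjB : j < B.card := hAB ▸ hjm
  have huA : u ∈ A := nth_mem hjm
  have hvB : v ∈ B := nth_mem hjB
  have huS : u ∈ S := (Finset.mem_sdiff.mp huA).1
  have hvS : v ∉ S := (Finset.mem_sdiff.mp hvB).2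
  have hvT : v ∈ T := (Finset.mem_sdiff.mp hvB).1
  have huv : u < v := by
    have h1 : j + 1 ≤ cntle B v := (nth_le_iff hjB).mp le_rfl
    have h2 : u ≤ v := (nth_le_iff hjm).mpr (le_trans h1 (hcntAB v))
    rcases lt_or_eq_of_le h2 with h | h
    · exact h
    · exact absurd (h ▸ huS) hvS
  set N := insert v (S.erase u) with hN
  have hvSe : v ∉ S.erase u := fun h => hvS (Finset.mem_of_mem_erase h)
  have hScard : 0 < S.card := Finset.card_pos.mpr ⟨u, huS⟩
  have hNcard : N.card = S.card := by
    rw [hN, Finset.card_insert_of_notMem hvSe, Finset.card_erase_of_mem huS]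
    omega
  have hcN : ∀ x, cntle N x + (if u ≤ x then 1 else 0)
      = cntle S x + (if v ≤ x then 1 else 0) := by
    intro x
    rw [hN, cntle_insert hvSe x]
    have := cntle_erase huS x
    omega
  have hmid : ∀ x, u ≤ x → x < v → cntle T x < cntle S x := by
    intro x hux hxv
    have h1 : j + 1 ≤ cntle A x := (nth_le_iff hjm).mp hux
    have h2 : cntle B x ≤ j := by
      by_contra hh
      push_neg at hh
      have := (nth_le_iff hjB).mpr hh
      omega
    have h3 := hSS x
    have h4 := hTS x
    omega
  have hgSN : gale S N := by
    rw [gale_iff (le_of_eq hNcard)]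
    intro x
    have h0 := hcN x
    have hor : v ≤ x → u ≤ x := fun h => le_of_lt (lt_of_lt_of_le huv h)
    split_ifs at h0 with h1 h2 h2 <;> omega
  have hgNT : gale N T := by
    rw [gale_iff (by omega)]
    intro x
    have h0 := hcN x
    have h1 := hcnt x
    by_cases hux : u ≤ x
    · by_cases hvx : v ≤ x
      · simp only [hux, hvx, if_true] at h0; omega
      · have h2 := hmid x hux (by omega)
        simp only [hux, hvx, if_true, if_false] at h0
        omega
    · have hvx : ¬ v ≤ x := by omega
      simp only [hux, hvx, if_false] at h0
      omega
  have hNne : N ≠ S := fun h => hvS (h ▸ Finset.mem_insert_self v _)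
  refine ⟨N, hgSN, hgNT, hNne, ?_, ?_⟩
  · -- wcount bound
    have hwN : wcount w N + w.count u = wcount w S + w.count v := by
      rw [wcount_eq_sum, wcount_eq_sum, hN, Finset.sum_insert hvSe]
      have hsp : ∑ x ∈ S.erase u, w.count x + w.count u = ∑ x ∈ S, w.count x :=
        Finset.sum_erase_add S (fun x => w.count x) huS
      omega
    have hwS : wcount w S = ∑ x ∈ A, w.count x + ∑ x ∈ S ∩ T, w.count x := by
      rw [wcount_eq_sum]
      conv_lhs => rw [← Finset.sdiff_union_inter S T]
      rw [Finset.sum_union (Finset.disjoint_sdiff_inter S T)]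
    have hwT : wcount w T = ∑ x ∈ B, w.count x + ∑ x ∈ S ∩ T, w.count x := by
      rw [wcount_eq_sum]
      conv_lhs => rw [← Finset.sdiff_union_inter T S]
      rw [Finset.sum_union (Finset.disjoint_sdiff_inter T S), Finset.inter_comm]
    have hAr : ∑ x ∈ A, w.count x = ∑ i ∈ Finset.range A.card, w.count (nth A i) :=
      (sum_range_nth _ _).symm
    have hBr : ∑ x ∈ B, w.count x = ∑ i ∈ Finset.range A.card, w.count (nth B i) := by
      rw [hAB]
      exact (sum_range_nth _ _).symm
    have hsum : ((∑ x ∈ B, w.count x : ℕ) : ℤ) - ((∑ x ∈ A, w.count x : ℕ) : ℤ)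
        ≤ (A.card : ℤ) * ((w.count v : ℤ) - w.count u) := by
      rw [hAr, hBr]
      push_cast
      rw [← Finset.sum_sub_distrib]
      calc ∑ i ∈ Finset.range A.card, ((w.count (nth B i) : ℤ) - w.count (nth A i))
          ≤ ∑ _i ∈ Finset.range A.card, ((w.count v : ℤ) - w.count u) :=
            Finset.sum_le_sum fun i hi => hjmax i hi
        _ = (A.card : ℤ) * ((w.count v : ℤ) - w.count u) := by
            rw [Finset.sum_const, Finset.card_range]
            ring
    rcases le_or_gt (w.count u) (w.count v) with hcase | hcase
    · omega
    · have hD : (w.count v : ℤ) - w.count u < 0 := by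
        have : (w.count v : ℤ) < w.count u := by exact_mod_cast hcase
        omega
      have hm1 : (1 : ℤ) ≤ (A.card : ℤ) := by exact_mod_cast hm
      have : (A.card : ℤ) * ((w.count v : ℤ) - w.count u)
          ≤ 1 * ((w.count v : ℤ) - w.count u) :=
        mul_le_mul_of_nonpos_right hm1 (le_of_lt hD)
      have hfin : (wcount w T : ℤ) + w.count u ≤ wcount w S + w.count v := by
        have e1 : (wcount w S : ℤ) = (∑ x ∈ A, w.count x : ℕ) + (∑ x ∈ S ∩ T, w.count x : ℕ) := by
          exact_mod_cast congrArg (Nat.cast : ℕ → ℤ) hwS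
        have e2 : (wcount w T : ℤ) = (∑ x ∈ B, w.count x : ℕ) + (∑ x ∈ S ∩ T, w.count x : ℕ) := by
          exact_mod_cast congrArg (Nat.cast : ℕ → ℤ) hwT
        push_cast at e1 e2 hsum ⊢
        omega
      have hfinN : wcount w T + w.count u ≤ wcount w S + w.count v := by exact_mod_cast hfin
      omega
  · -- chain bound
    intro P hP
    obtain ⟨h1, h2, h3, h4⟩ := hP
    have hcards : ∀ Q ∈ P, Q.card = S.card := fun Q hQ =>
      le_antisymm (h4 Q hQ).1.1 (hNcard ▸ (h4 Q hQ).2.1)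
    have hchain : (P.map (fun Q => ∑ x ∈ Q, x)).Chain' (· < ·) := by
      simp only [List.Chain'] at h3 ⊢
      rw [List.isChain_map, List.isChain_iff_getElem]
      rw [List.isChain_iff_getElem] at h3
      intro i hi
      have hg := h3 i hi
      exact sum_lt_of_gale hg.1
        (by rw [hcards _ (List.getElem_mem _), hcards _ (List.getElem_mem _)]) hg.2
    have hhead : (P.map (fun Q => ∑ x ∈ Q, x)).head? = some (∑ x ∈ S, x) := by
      rw [List.head?_map, h1]; rfl
    have hlast : (P.map (fun Q => ∑ x ∈ Q, x)).getLast? = some (∑ x ∈ N, x) := by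
      rw [List.getLast?_map, h2]; rfl
    have hlen := chain_lt_len _ _ _ hchain hhead hlast
    rw [List.length_map] at hlen
    have hsumN : ∑ x ∈ N, x + u = ∑ x ∈ S, x + v := by
      rw [hN, Finset.sum_insert hvSe]
      have hsp : ∑ x ∈ S.erase u, x + u = ∑ x ∈ S, x :=
        Finset.sum_erase_add S (fun x => x) huS
      omega
    have hu1 : 1 ≤ u := (Finset.mem_Icc.mp (hS huS)).1
    have hvn : v ≤ n := (Finset.mem_Icc.mp (hT hvT)).2
    omega
end

section
/- Let w be a word over {1,…,n} and S, T ⊆ {1,…,n} with |S| = |T|, S < T, and |w|_S ≤ |w|_T. Then there exists N ∈ [S,T] with N ≠ S such that [S,N] has chain length at most n and |w|_M ≤ |w|_N for all M ∈ [S,N]. -/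
/-! ### Auxiliary machinery -/

/-- The rank of a finite set: the sum of its elements. -/
private def rk (M : Finset ℕ) : ℕ := ∑ v ∈ M, v

private lemma nth_lt {M : Finset ℕ} {i j : ℕ} (hij : i < j) (hj : j < M.card) :
    nth M i < nth M j := by
  have hlen : (M.sort (· ≤ ·)).length = M.card := Finset.length_sort _
  have hj' : j < (M.sort (· ≤ ·)).length := by omega
  have hi' : i < (M.sort (· ≤ ·)).length := by omega
  rw [nth, nth, List.getD_eq_getElem _ _ hi', List.getD_eq_getElem _ _ hj']
  exact List.pairwise_iff_getElem.1 (Finset.sortedLT_sort M).pairwise i j hi' hj' hij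

private lemma nth_mem_s12 {M : Finset ℕ} {i : ℕ} (hi : i < M.card) : nth M i ∈ M := by
  have hlen : (M.sort (· ≤ ·)).length = M.card := Finset.length_sort _
  have hi' : i < (M.sort (· ≤ ·)).length := by omega
  rw [nth, List.getD_eq_getElem _ _ hi']
  exact (Finset.mem_sort _).1 (List.getElem_mem hi')

private lemma injOn_of_mono {k : ℕ} {X : ℕ → ℕ}
    (hmono : ∀ i j, i < j → j < k → X i < X j) :
    ∀ x ∈ Finset.range k, ∀ y ∈ Finset.range k, X x = X y → x = y := by
  intro i hi j hj hij
  rw [Finset.mem_range] at hi hj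
  by_contra hne
  rcases lt_or_gt_of_ne hne with h | h
  · exact absurd hij (ne_of_lt (hmono _ _ h hj))
  · exact absurd hij.symm (ne_of_lt (hmono _ _ h hi))

private lemma nth_mono {M : Finset ℕ} :
    ∀ i j, i < j → j < M.card → nth M i < nth M j := fun _ _ hij hj => nth_lt hij hj

private lemma image_nth (M : Finset ℕ) : (Finset.range M.card).image (nth M) = M := by
  apply Finset.eq_of_subset_of_card_le
  · intro x hx
    simp only [Finset.mem_image, Finset.mem_range] at hx
    obtain ⟨i, hi, rfl⟩ := hx
    exact nth_mem_s12 hi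
  · rw [Finset.card_image_of_injOn
      (fun x hx y hy hxy =>
        injOn_of_mono nth_mono x (by simpa using hx) y (by simpa using hy) hxy),
      Finset.card_range]

private lemma sum_nth (M : Finset ℕ) (g : ℕ → ℕ) :
    ∑ v ∈ M, g v = ∑ i ∈ Finset.range M.card, g (nth M i) := by
  conv_lhs => rw [← image_nth M]
  rw [Finset.sum_image (injOn_of_mono nth_mono)]

private lemma wcount_eq (w : List ℕ) (M : Finset ℕ) : wcount w M = ∑ v ∈ M, w.count v := by
  induction w with
  | nil => simp [wcount]
  | cons x w ih =>
    have hcount : ∀ v ∈ M, (x :: w).count v = w.count v + if v = x then 1 else 0 := by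
      intro v _
      rw [List.count_cons]
      congr 1
      by_cases h : v = x
      · subst h
        simp
      · rw [if_neg (by simpa using fun hh : x = v => h hh.symm), if_neg h]
    rw [Finset.sum_congr rfl hcount, Finset.sum_add_distrib,
      Finset.sum_ite_eq' M x (fun _ => 1)]
    rw [wcount] at ih ⊢
    simp only [List.filter_cons]
    by_cases hx : x ∈ M
    · rw [if_pos (by simpa using hx), if_pos hx, List.length_cons, ih]
    · rw [if_neg (by simpa using hx), if_neg hx, ih, add_zero]

private lemma gale_refl (M : Finset ℕ) : gale M M := ⟨le_rfl, fun _ _ => le_rfl⟩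

private lemma gale_trans {A B C : Finset ℕ} (h1 : gale A B) (h2 : gale B C) : gale A C :=
  ⟨h2.1.trans h1.1, fun i hi => (h1.2 i (lt_of_lt_of_le hi h2.1)).trans (h2.2 i hi)⟩

private lemma adjStrict {k : ℕ} {f : ℕ → ℕ} (h : ∀ i, i + 1 < k → f i < f (i + 1)) :
    ∀ i j, i < j → j < k → f i < f j := by
  intro i j hij hj
  induction j with
  | zero => omega
  | succ m ih =>
    rcases Nat.lt_or_ge i m with h' | h'
    · exact (ih h' (by omega)).trans (h m hj)
    · have : i = m := by omega
      subst this
      exact h i hj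

private lemma nth_image {k : ℕ} {X : ℕ → ℕ}
    (hmono : ∀ i j, i < j → j < k → X i < X j) :
    ((Finset.range k).image X).card = k ∧
      ∀ i, i < k → nth ((Finset.range k).image X) i = X i := by
  have hcard : ((Finset.range k).image X).card = k := by
    rw [Finset.card_image_of_injOn
      (fun x hx y hy hxy =>
        injOn_of_mono hmono x (by simpa using hx) y (by simpa using hy) hxy),
      Finset.card_range]
  refine ⟨hcard, ?_⟩
  set l : List ℕ := (List.range k).map X with hl
  have hlen : l.length = k := by simp [hl]
  have hget : ∀ i (h : i < l.length), l[i] = X i := by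
    intro i h
    simp [hl]
  have hsorted : l.Pairwise (· < ·) := by
    rw [List.pairwise_iff_getElem]
    intro i j hi hj hij
    rw [hget i hi, hget j hj]
    exact hmono i j hij (by omega)
  have htf : l.toFinset = (Finset.range k).image X := by
    ext x
    simp [hl]
  have hperm : List.Perm (((Finset.range k).image X).sort (· ≤ ·)) l := by
    apply List.perm_of_nodup_nodup_toFinset_eq (Finset.sort_nodup _ _)
      (hsorted.imp ne_of_lt)
    rw [Finset.sort_toFinset, htf]
  have hsort : ((Finset.range k).image X).sort (· ≤ ·) = l :=
    List.Perm.eq_of_pairwise' (Finset.pairwise_sort _ _) (hsorted.imp le_of_lt) hperm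
  intro i hi
  rw [nth, hsort, List.getD_eq_getElem _ _ (by omega : i < l.length), hget]

private lemma len_bound : ∀ (l : List ℕ) (Lo Hi : ℕ), l.Pairwise (· < ·) →
    (∀ x ∈ l, Lo ≤ x ∧ x ≤ Hi) → Lo ≤ Hi + 1 → l.length + Lo ≤ Hi + 1 := by
  intro l
  induction l with
  | nil =>
    intro Lo Hi _ _ h
    simpa using h
  | cons a t ih =>
    intro Lo Hi hp hmem hLo
    have ha := hmem a (by simp)
    have h1 : ∀ x ∈ t, a + 1 ≤ x ∧ x ≤ Hi := by
      intro x hx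
      exact ⟨(List.pairwise_cons.1 hp).1 x hx, (hmem x (by simp [hx])).2⟩
    have h2 := ih (a + 1) Hi (List.pairwise_cons.1 hp).2 h1 (by omega)
    simp only [List.length_cons]
    omega

private lemma rk_eq (M : Finset ℕ) : rk M = ∑ i ∈ Finset.range M.card, nth M i :=
  sum_nth M id

private lemma rk_le {A B : Finset ℕ} (h : gale A B) (hc : A.card = B.card) :
    rk A ≤ rk B := by
  rw [rk_eq A, rk_eq B, hc]
  exact Finset.sum_le_sum fun i hi => h.2 i (Finset.mem_range.1 hi)

private lemma eq_of_rk_le {A B : Finset ℕ} (h : gale A B) (hc : A.card = B.card)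
    (hle : rk B ≤ rk A) : A = B := by
  have hpt : ∀ i ∈ Finset.range B.card, nth A i ≤ nth B i :=
    fun i hi => h.2 i (Finset.mem_range.1 hi)
  have e1 : rk A = ∑ i ∈ Finset.range B.card, nth A i := by rw [rk_eq A, hc]
  have e2 : rk B = ∑ i ∈ Finset.range B.card, nth B i := rk_eq B
  have hsle := Finset.sum_le_sum hpt
  have hsum : ∑ i ∈ Finset.range B.card, nth A i = ∑ i ∈ Finset.range B.card, nth B i := by
    omega
  have heq := (Finset.sum_eq_sum_iff_of_le hpt).1 hsum
  have himg : (Finset.range A.card).image (nth A) = (Finset.range B.card).image (nth B) := by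
    rw [hc]
    apply Finset.image_congr
    intro i hi
    exact heq i (Finset.mem_coe.1 hi)
  rw [image_nth, image_nth] at himg
  exact himg

private lemma rk_lt {A B : Finset ℕ} (h : gale A B) (hc : A.card = B.card)
    (hne : A ≠ B) : rk A < rk B := by
  rcases lt_or_ge (rk A) (rk B) with h' | h'
  · exact h'
  · exact absurd (eq_of_rk_le h hc h') hne

theorem stmt_12 (n : ℕ) (w : List ℕ) (hw : ∀ x ∈ w, x ∈ Finset.Icc 1 n)
    (S T : Finset ℕ) (hS : S ⊆ Finset.Icc 1 n) (hT : T ⊆ Finset.Icc 1 n)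
    (hcard : S.card = T.card) (hST : gale S T) (hne : S ≠ T)
    (hw' : wcount w S ≤ wcount w T) :
    ∃ N : Finset ℕ, gale S N ∧ gale N T ∧ N ≠ S ∧
      (∀ P : List (Finset ℕ), isChain S N P → P.length ≤ n) ∧
      ∀ M : Finset ℕ, gale S M → gale M N → wcount w M ≤ wcount w N := by
  classical
  set k := S.card with hk
  have hTcard : T.card = k := hcard.symm
  have hk1 : 1 ≤ k := by
    rcases Nat.eq_zero_or_pos k with h0 | h
    · exfalso
      have hS0 : S = ∅ := Finset.card_eq_zero.1 (by omega)
      have hT0 : T = ∅ := Finset.card_eq_zero.1 (by omega)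
      exact hne (hS0.trans hT0.symm)
    · exact h
  have hexists : ∃ r : ℕ, ∃ M : Finset ℕ,
      (gale S M ∧ gale M T ∧ M ≠ S ∧ wcount w S ≤ wcount w M) ∧ rk M = r :=
    ⟨rk T, T, ⟨hST, gale_refl T, Ne.symm hne, hw'⟩, rfl⟩
  obtain ⟨N, ⟨hSN, hNT, hNneS, hfSN⟩, hrkN⟩ := Nat.find_spec hexists
  have hmin : ∀ M : Finset ℕ,
      (gale S M ∧ gale M T ∧ M ≠ S ∧ wcount w S ≤ wcount w M) → Nat.find hexists ≤ rk M :=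
    fun M hM => Nat.find_min' hexists ⟨M, hM, rfl⟩
  have hNcard : N.card = k := le_antisymm hSN.1 (by rw [← hTcard]; exact hNT.1)
  have hAB : ∀ i, i < k → nth S i ≤ nth N i := fun i hi => hSN.2 i (by omega)
  have hA1 : ∀ i, i < k → 1 ≤ nth S i :=
    fun i hi => (Finset.mem_Icc.1 (hS (nth_mem_s12 (by omega)))).1
  have hBn : ∀ i, i < k → nth N i ≤ n := by
    intro i hi
    have h1 : nth N i ≤ nth T i := hNT.2 i (by omega)
    have h2 : nth T i ∈ T := nth_mem_s12 (by omega)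
    exact h1.trans (Finset.mem_Icc.1 (hT h2)).2
  have hAmono : ∀ i j, i < j → j < k → nth S i < nth S j :=
    fun i j hij hj => nth_lt hij (by omega)
  have hBmono : ∀ i j, i < j → j < k → nth N i < nth N j :=
    fun i j hij hj => nth_lt hij (by omega)
  have hrkS' : rk S = ∑ i ∈ Finset.range k, nth S i := by rw [rk_eq S, ← hk]
  have hrkN' : rk N = ∑ i ∈ Finset.range k, nth N i := by rw [rk_eq N, hNcard]
  -- the minimal N admits no strict overlap
  have hno : ∀ j, j + 1 < k → nth N j ≤ nth S (j + 1) := by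
    by_contra hex
    push_neg at hex
    obtain ⟨j, hjk, hov⟩ := hex
    set X : ℕ → ℕ := fun i => max (nth S i) (if i = 0 then 0 else nth N (i - 1)) with hX
    set Y : ℕ → ℕ := fun i => if i + 1 < k then min (nth N i) (nth S (i + 1)) else nth N i
      with hY
    have hXform : ∀ i, X (i + 1) = max (nth S (i + 1)) (nth N i) := by
      intro i
      simp only [hX]
      simp
    have hX0 : X 0 = nth S 0 := by
      simp only [hX]
      simp
    have hYform : ∀ i, i + 1 < k → Y i = min (nth N i) (nth S (i + 1)) := by
      intro i h
      simp only [hY]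
      rw [if_pos h]
    have hYlast : ∀ i, ¬(i + 1 < k) → Y i = nth N i := by
      intro i h
      simp only [hY]
      rw [if_neg h]
    have p1 : ∀ i, i < k → nth S i ≤ X i := by
      intro i _
      cases i with
      | zero => rw [hX0]
      | succ m => rw [hXform]; exact le_max_left _ _
    have p2 : ∀ i, i < k → X i ≤ nth N i := by
      intro i hi
      cases i with
      | zero => rw [hX0]; exact hAB 0 hi
      | succ m =>
        rw [hXform]
        exact max_le (hAB _ hi) (le_of_lt (hBmono m (m + 1) (by omega) hi))
    have p3 : ∀ i, i < k → nth S i ≤ Y i := by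
      intro i hi
      by_cases h : i + 1 < k
      · rw [hYform i h]
        exact le_min (hAB i hi) (le_of_lt (hAmono i (i + 1) (by omega) h))
      · rw [hYlast i h]
        exact hAB i hi
    have p4 : ∀ i, i < k → Y i ≤ nth N i := by
      intro i hi
      by_cases h : i + 1 < k
      · rw [hYform i h]
        exact min_le_left _ _
      · rw [hYlast i h]
    have p5 : ∀ i, i + 1 < k → X i < X (i + 1) := by
      intro i hi
      cases i with
      | zero =>
        rw [hX0, hXform 0]
        exact lt_of_lt_of_le (hAmono 0 1 (by omega) hi) (le_max_left _ _)
      | succ m =>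
        rw [hXform m, hXform (m + 1)]
        exact max_lt
          (lt_of_lt_of_le (hAmono (m + 1) (m + 2) (by omega) hi) (le_max_left _ _))
          (lt_of_lt_of_le (hBmono m (m + 1) (by omega) (by omega)) (le_max_right _ _))
    have p6 : ∀ i, i + 1 < k → Y i < Y (i + 1) := by
      intro i hi
      rw [hYform i hi]
      by_cases h2 : i + 2 < k
      · rw [hYform (i + 1) (by omega)]
        exact lt_min (lt_of_le_of_lt (min_le_left _ _) (hBmono i (i + 1) (by omega) hi))
          (lt_of_le_of_lt (min_le_right _ _) (hAmono (i + 1) (i + 2) (by omega) h2))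
      · rw [hYlast (i + 1) (by omega)]
        exact lt_of_le_of_lt (min_le_left _ _) (hBmono i (i + 1) (by omega) hi)
    have hXmono := adjStrict p5
    have hYmono := adjStrict p6
    have p7 : ∀ g : ℕ → ℕ,
        (∑ i ∈ Finset.range k, g (X i)) + (∑ i ∈ Finset.range k, g (Y i))
          = (∑ i ∈ Finset.range k, g (nth S i)) + (∑ i ∈ Finset.range k, g (nth N i)) := by
      intro g
      obtain ⟨m, hm⟩ : ∃ m, k = m + 1 := ⟨k - 1, by omega⟩
      rw [hm, Finset.sum_range_succ' (fun i => g (X i)) m,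
        Finset.sum_range_succ (fun i => g (Y i)) m,
        Finset.sum_range_succ' (fun i => g (nth S i)) m,
        Finset.sum_range_succ (fun i => g (nth N i)) m]
      have hYm : Y m = nth N m := hYlast m (by omega)
      have hmid : (∑ i ∈ Finset.range m, g (X (i + 1))) + ∑ i ∈ Finset.range m, g (Y i)
          = (∑ i ∈ Finset.range m, g (nth S (i + 1))) + ∑ i ∈ Finset.range m, g (nth N i) := by
        rw [← Finset.sum_add_distrib, ← Finset.sum_add_distrib]
        apply Finset.sum_congr rfl
        intro i hi
        have hik : i + 1 < k := by
          have := Finset.mem_range.1 hi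
          omega
        rcases le_total (nth S (i + 1)) (nth N i) with h | h
        · rw [hXform i, hYform i hik, max_eq_right h, min_eq_right h, add_comm]
        · rw [hXform i, hYform i hik, max_eq_left h, min_eq_left h]
      rw [hX0, hYm]
      omega
    have p8 : nth S (j + 1) < X (j + 1) := by
      rw [hXform j]
      exact lt_of_lt_of_le hov (le_max_right _ _)
    have p9 : nth S j < Y j := by
      rw [hYform j hjk]
      exact lt_min (lt_of_lt_of_le (hAmono j (j + 1) (by omega) hjk) (le_of_lt hov))
        (hAmono j (j + 1) (by omega) hjk)
    set Fx := (Finset.range k).image X with hFx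
    set Fy := (Finset.range k).image Y with hFy
    obtain ⟨hFxcard, hFxnth⟩ := nth_image hXmono
    obtain ⟨hFycard, hFynth⟩ := nth_image hYmono
    rw [← hFx] at hFxcard hFxnth
    rw [← hFy] at hFycard hFynth
    have hsumFx : ∀ g : ℕ → ℕ, ∑ v ∈ Fx, g v = ∑ i ∈ Finset.range k, g (X i) := by
      intro g
      rw [hFx, Finset.sum_image (injOn_of_mono hXmono)]
    have hsumFy : ∀ g : ℕ → ℕ, ∑ v ∈ Fy, g v = ∑ i ∈ Finset.range k, g (Y i) := by
      intro g
      rw [hFy, Finset.sum_image (injOn_of_mono hYmono)]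
    have hgSFx : gale S Fx := by
      refine ⟨by omega, ?_⟩
      intro i hi
      rw [hFxnth i (by omega)]
      exact p1 i (by omega)
    have hgFxN : gale Fx N := by
      refine ⟨by omega, ?_⟩
      intro i hi
      rw [hFxnth i (by omega)]
      exact p2 i (by omega)
    have hgSFy : gale S Fy := by
      refine ⟨by omega, ?_⟩
      intro i hi
      rw [hFynth i (by omega)]
      exact p3 i (by omega)
    have hgFyN : gale Fy N := by
      refine ⟨by omega, ?_⟩
      intro i hi
      rw [hFynth i (by omega)]
      exact p4 i (by omega)
    have hrkFx : rk Fx = ∑ i ∈ Finset.range k, X i := hsumFx id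
    have hrkFy : rk Fy = ∑ i ∈ Finset.range k, Y i := hsumFy id
    have hXgtS : rk S < rk Fx := by
      rw [hrkS', hrkFx]
      exact Finset.sum_lt_sum (fun i hi => p1 i (Finset.mem_range.1 hi))
        ⟨j + 1, Finset.mem_range.2 hjk, p8⟩
    have hYgtS : rk S < rk Fy := by
      rw [hrkS', hrkFy]
      exact Finset.sum_lt_sum (fun i hi => p3 i (Finset.mem_range.1 hi))
        ⟨j, Finset.mem_range.2 (by omega), p9⟩
    have hsumrk : rk Fx + rk Fy = rk S + rk N := by
      rw [hrkFx, hrkFy, hrkS', hrkN']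
      exact p7 id
    have hwFx : wcount w Fx = ∑ i ∈ Finset.range k, w.count (X i) := by
      rw [wcount_eq]
      exact hsumFx fun v => w.count v
    have hwFy : wcount w Fy = ∑ i ∈ Finset.range k, w.count (Y i) := by
      rw [wcount_eq]
      exact hsumFy fun v => w.count v
    have hwS : wcount w S = ∑ i ∈ Finset.range k, w.count (nth S i) := by
      rw [wcount_eq, sum_nth, ← hk]
    have hwN : wcount w N = ∑ i ∈ Finset.range k, w.count (nth N i) := by
      rw [wcount_eq, sum_nth, hNcard]
    have hwsum : wcount w Fx + wcount w Fy = wcount w S + wcount w N := by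
      rw [hwFx, hwFy, hwS, hwN]
      exact p7 fun v => w.count v
    have hVx : wcount w S ≤ wcount w Fx ∨ wcount w S ≤ wcount w Fy := by omega
    rcases hVx with hV | hV
    · have hFxne : Fx ≠ S := by
        intro h
        rw [h] at hXgtS
        omega
      have h1 := hmin Fx ⟨hgSFx, gale_trans hgFxN hNT, hFxne, hV⟩
      omega
    · have hFyne : Fy ≠ S := by
        intro h
        rw [h] at hYgtS
        omega
      have h1 := hmin Fy ⟨hgSFy, gale_trans hgFyN hNT, hFyne, hV⟩
      omega
  -- key rank bound
  have hkey : rk N + 1 ≤ rk S + n := by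
    obtain ⟨m, hm⟩ : ∃ m, k = m + 1 := ⟨k - 1, by omega⟩
    have e1 : rk N = (∑ i ∈ Finset.range m, nth N i) + nth N m := by
      rw [hrkN', hm, Finset.sum_range_succ]
    have e2 : rk S = (∑ i ∈ Finset.range m, nth S (i + 1)) + nth S 0 := by
      rw [hrkS', hm, Finset.sum_range_succ']
    have hsum_le : ∑ i ∈ Finset.range m, nth N i ≤ ∑ i ∈ Finset.range m, nth S (i + 1) :=
      Finset.sum_le_sum fun i hi => hno i (by have := Finset.mem_range.1 hi; omega)
    have hlast : nth N m ≤ n := hBn m (by omega)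
    have hfirst : 1 ≤ nth S 0 := hA1 0 (by omega)
    omega
  refine ⟨N, hSN, hNT, hNneS, ?_, ?_⟩
  · -- chain bound
    intro P hP
    obtain ⟨hhead, hlastP, hchain, hmem⟩ := hP
    have hQcard : ∀ Q ∈ P, Q.card = k := by
      intro Q hQ
      obtain ⟨h1, h2⟩ := hmem Q hQ
      exact le_antisymm h1.1 (by rw [← hNcard]; exact h2.1)
    have hbounds : ∀ x ∈ P.map rk, rk S ≤ x ∧ x ≤ rk N := by
      intro x hx
      rw [List.mem_map] at hx
      obtain ⟨Q, hQ, rfl⟩ := hx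
      obtain ⟨h1, h2⟩ := hmem Q hQ
      exact ⟨rk_le h1 (by rw [hQcard Q hQ, hk]), rk_le h2 (by rw [hQcard Q hQ, hNcard])⟩
    have hmapchain : (P.map rk).Chain' (· < ·) := by
      unfold List.Chain' at hchain ⊢
      rw [List.isChain_iff_getElem] at hchain ⊢
      intro i hi
      rw [List.length_map] at hi
      have hi1 : i < P.length := by omega
      have hi2 : i + 1 < P.length := by omega
      rw [List.getElem_map, List.getElem_map]
      have hrel := hchain i (by omega)
      have hm1 : P[i] ∈ P := List.getElem_mem hi1
      have hm2 : P[i + 1] ∈ P := List.getElem_mem hi2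
      exact rk_lt hrel.1 (by rw [hQcard _ hm1, hQcard _ hm2]) hrel.2
    have hpair : (P.map rk).Pairwise (· < ·) := List.isChain_iff_pairwise.1 hmapchain
    have hSleN : rk S ≤ rk N := rk_le hSN (by rw [hNcard, hk])
    have hlen := len_bound (P.map rk) (rk S) (rk N) hpair hbounds (by omega)
    rw [List.length_map] at hlen
    omega
  · -- maximality of wcount
    intro M hSM hMN
    by_contra hgt
    push_neg at hgt
    have hMcard : M.card = k := le_antisymm hSM.1 (by rw [← hNcard]; exact hMN.1)
    have hMneS : M ≠ S := by
      intro h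
      rw [h] at hgt
      omega
    have h1 := hmin M ⟨hSM, gale_trans hMN hNT, hMneS, by omega⟩
    have h2 : rk M ≤ rk N := rk_le hMN (by rw [hMcard, hNcard])
    have h3 : rk N ≤ rk M := by omega
    have hMN' : M = N := eq_of_rk_le hMN (by rw [hMcard, hNcard]) h3
    rw [hMN'] at hgt
    omega
end
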